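/- Let Y be a real symmetric n×n matrix. Then the supremum of trace(Y*X) over all symmetric matrices X with 0 ⪯ X ⪯ I equals the sum of the positive parts of the eigenvalues of Y, i.e., sup { trace(Y X) : X symmetric, X positive semidefinite, I - X positive semidefinite } = Σᵢ max(λᵢ(Y), 0). Moreover the supremum is attained. -/

import Mathlib

open Matrix

lemma diag_nn {n : ℕ} {A : Matrix (Fin n) (Fin n) ℝ} (hA : A.PosSemidef) (i : Fin n) :
    0 ≤ A i i := by
  have := hA.dotProduct_mulVec_nonneg (Pi.single i 1)
  simpa [dotProduct, mulVec, Pi.single_apply] using this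

lemma trace_diagonal_mul' {n : ℕ} (d : Fin n → ℝ) (B : Matrix (Fin n) (Fin n) ℝ) :
    (diagonal d * B).trace = ∑ i, d i * B i i := by
  simp [trace, diag, mul_apply, diagonal]

theorem stmt_1 {n : ℕ} (Y : Matrix (Fin n) (Fin n) ℝ) (hY : Y.IsHermitian) :
    IsGreatest
      {t : ℝ | ∃ X : Matrix (Fin n) (Fin n) ℝ,
        X.IsHermitian ∧ X.PosSemidef ∧ (1 - X).PosSemidef ∧ t = (Y * X).trace}
      (∑ i, max (hY.eigenvalues i) 0) := by
  classical
  set U : Matrix (Fin n) (Fin n) ℝ := (hY.eigenvectorUnitary : Matrix (Fin n) (Fin n) ℝ) with hU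
  set d : Fin n → ℝ := hY.eigenvalues with hd
  have hUU : U * Uᴴ = 1 := by
    rw [← star_eq_conjTranspose]
    exact (Matrix.mem_unitaryGroup_iff).mp hY.eigenvectorUnitary.2
  have hUU' : Uᴴ * U = 1 := by
    rw [← star_eq_conjTranspose]
    exact (Matrix.mem_unitaryGroup_iff').mp hY.eigenvectorUnitary.2
  have hUU2 : ∀ A : Matrix (Fin n) (Fin n) ℝ, Uᴴ * (U * A) = A := fun A => by
    rw [← Matrix.mul_assoc, hUU', Matrix.one_mul]
  have hspec : Y = U * diagonal d * Uᴴ := by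
    have := hY.spectral_theorem
    simpa [U, d, Function.comp, star_eq_conjTranspose] using this
  constructor
  · -- membership
    set p : Fin n → ℝ := fun i => if 0 ≤ d i then 1 else 0 with hp
    have hPSD : (U * diagonal p * Uᴴ).PosSemidef :=
      (Matrix.PosSemidef.diagonal (fun i => by dsimp only [p]; positivity)).mul_mul_conjTranspose_same U
    refine ⟨U * diagonal p * Uᴴ, hPSD.1, hPSD, ?_, ?_⟩
    · have h1 : (1 : Matrix (Fin n) (Fin n) ℝ) - U * diagonal p * Uᴴ
          = U * (1 - diagonal p) * Uᴴ := by
        rw [Matrix.mul_sub, Matrix.sub_mul, Matrix.mul_one, hUU]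
      rw [h1, show (1 : Matrix (Fin n) (Fin n) ℝ) - diagonal p
          = diagonal (fun i => 1 - p i) by
            ext i j; by_cases hij : i = j <;> simp [diagonal_apply, one_apply, hij]]
      refine (Matrix.PosSemidef.diagonal (fun i => ?_)).mul_mul_conjTranspose_same U
      dsimp only [p]; split <;> norm_num
    · have key : U * diagonal d * Uᴴ * (U * diagonal p * Uᴴ)
          = U * (diagonal d * diagonal p) * Uᴴ := by
        simp only [Matrix.mul_assoc, hUU2]
      rw [hspec, key, diagonal_mul_diagonal, Matrix.trace_mul_cycle,
        hUU', Matrix.one_mul, trace_diagonal]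
      refine Finset.sum_congr rfl fun i _ => ?_
      dsimp only [p]
      split <;> rename_i h
      · simp [max_eq_left h]
      · simp [max_eq_right (le_of_not_ge h), mul_zero]
  · -- upper bound
    rintro t ⟨X, hXH, hX0, hX1, rfl⟩
    set B : Matrix (Fin n) (Fin n) ℝ := Uᴴ * X * U with hB
    have hB0 : B.PosSemidef := hX0.conjTranspose_mul_mul_same U
    have hB1 : (1 - B).PosSemidef := by
      have h := hX1.conjTranspose_mul_mul_same U
      have h1 : Uᴴ * (1 - X) * U = 1 - B := by
        rw [Matrix.mul_sub, Matrix.mul_one, Matrix.sub_mul, hUU', hB]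
      rwa [h1] at h
    have htr : (Y * X).trace = ∑ i, d i * B i i :=
      calc (Y * X).trace = (U * (diagonal d * Uᴴ * X)).trace := by
            rw [hspec]; simp only [Matrix.mul_assoc]
        _ = ((diagonal d * Uᴴ * X) * U).trace := Matrix.trace_mul_comm _ _
        _ = (diagonal d * B).trace := by rw [hB]; simp only [Matrix.mul_assoc]
        _ = ∑ i, d i * B i i := trace_diagonal_mul' _ _
    rw [htr]
    refine Finset.sum_le_sum fun i _ => ?_
    have h0 : 0 ≤ B i i := diag_nn hB0 i
    have h1 : B i i ≤ 1 := by
      have := diag_nn hB1 i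
      simpa [Matrix.sub_apply, Matrix.one_apply] using this
    rcases le_or_gt 0 (d i) with h | h
    · calc d i * B i i ≤ d i * 1 := by nlinarith
        _ = d i := mul_one _
        _ ≤ max (d i) 0 := le_max_left _ _
    · calc d i * B i i ≤ 0 := mul_nonpos_of_nonpos_of_nonneg h.le h0
        _ ≤ max (d i) 0 := le_max_right _ _
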